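/- arXiv:2111.00664 — 2 statements merged into one kernel-verified Lean document; each statement's English description precedes it below -/
import Mathlib

section
/- There exist absolute constants c, C > 0 such that the following holds. Let δ ∈ (0,1/2) and let k, p, r be positive integers with k < log(1/δ), p ≥ log(1/δ), and r ≤ c·log(1/δ). Let u₁, …, u_k be i.i.d. standard Gaussian vectors in ℝ^r and v₁, …, v_k be i.i.d. standard Gaussian vectors in ℝ^p, with all 2k vectors mutually independent. Then with probability at least 1 − δ, Σ_{i=1}^{k} ‖uᵢ‖₂²·‖vᵢ‖₂² ≤ C·k·log(1/δ)·p. -/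
open MeasureTheory ProbabilityTheory Matrix
open scoped NNReal ENNReal

instance matrixMeasurableSpace (n m : ℕ) : MeasurableSpace (Matrix (Fin n) (Fin m) ℝ) :=
  MeasurableSpace.pi

/-- The law of an `n × m` random matrix with i.i.d. standard Gaussian `N(0,1)` entries. -/
noncomputable def gaussianMatrix (n m : ℕ) : Measure (Matrix (Fin n) (Fin m) ℝ) :=
  Measure.pi fun _ : Fin n => Measure.pi fun _ : Fin m => gaussianReal 0 1

/-- The law of an `n × m` random matrix with i.i.d. `N(0,v)` entries. -/
noncomputable def gaussianMatrixVar (n m : ℕ) (v : ℝ≥0) : Measure (Matrix (Fin n) (Fin m) ℝ) :=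
  Measure.pi fun _ : Fin n => Measure.pi fun _ : Fin m => gaussianReal 0 v

/-- The law of a random vector in `ℝⁿ` with i.i.d. standard Gaussian `N(0,1)` entries. -/
noncomputable def gaussianVec (n : ℕ) : Measure (Fin n → ℝ) :=
  Measure.pi fun _ : Fin n => gaussianReal 0 1

/-- Frobenius norm of a real matrix. -/
noncomputable def frob {n m : ℕ} (M : Matrix (Fin n) (Fin m) ℝ) : ℝ :=
  Real.sqrt (∑ i, ∑ j, (M i j) ^ 2)

/-- Euclidean norm of a vector in `ℝⁿ`. -/
noncomputable def euclNorm {n : ℕ} (v : Fin n → ℝ) : ℝ :=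
  Real.sqrt (∑ i, (v i) ^ 2)

/-- `P` is a Moore–Penrose pseudoinverse of `M`. -/
def IsMoorePenrose {a b : ℕ} (M : Matrix (Fin a) (Fin b) ℝ)
    (P : Matrix (Fin b) (Fin a) ℝ) : Prop :=
  M * P * M = M ∧ P * M * P = P ∧ (M * P)ᵀ = M * P ∧ (P * M)ᵀ = P * M

/-- Best rank-`k` approximation error of `A` in Frobenius norm. -/
noncomputable def rankErr {n : ℕ} (A : Matrix (Fin n) (Fin n) ℝ) (k : ℕ) : ℝ :=
  sInf {e : ℝ | ∃ B : Matrix (Fin n) (Fin n) ℝ, B.rank ≤ k ∧ e = frob (A - B)}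

open Real in
lemma gauss_exp_quarter :
    ∫⁻ x, ENNReal.ofReal (Real.exp (x ^ 2 / 4)) ∂(gaussianReal 0 1) =
      ENNReal.ofReal (Real.sqrt 2) := by
  rw [gaussianReal_of_var_ne_zero _ one_ne_zero,
    lintegral_withDensity_eq_lintegral_mul _ (measurable_gaussianPDF 0 1)
      (by measurability)]
  have h1 : ∀ x : ℝ, (gaussianPDF 0 1 * fun x => ENNReal.ofReal (Real.exp (x ^ 2 / 4))) x
      = ENNReal.ofReal ((Real.sqrt (2 * π))⁻¹ * Real.exp (-(4 : ℝ)⁻¹ * x ^ 2)) := by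
    intro x
    simp only [Pi.mul_apply, gaussianPDF, gaussianPDFReal, NNReal.coe_one, mul_one, sub_zero]
    rw [← ENNReal.ofReal_mul (by positivity)]
    rw [mul_assoc, ← Real.exp_add]
    ring_nf
  simp_rw [h1]
  rw [← ofReal_integral_eq_lintegral_ofReal]
  · rw [integral_const_mul, integral_gaussian]
    congr 1
    have h2 : Real.sqrt 2 * Real.sqrt 2 = 2 := Real.mul_self_sqrt (by norm_num)
    have hpi : (0:ℝ) < Real.sqrt π := Real.sqrt_pos.2 pi_pos
    rw [show π / (4:ℝ)⁻¹ = 4 * π by ring, Real.sqrt_mul (by norm_num),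
      Real.sqrt_mul (by norm_num) π,
      show Real.sqrt 4 = 2 by rw [show (4:ℝ) = 2^2 by norm_num, Real.sqrt_sq (by norm_num)]]
    field_simp
    nlinarith [h2, hpi]
  · exact (Integrable.const_mul (integrable_exp_neg_mul_sq (by norm_num)) _)
  · filter_upwards with x
    positivity

lemma lintegral_gaussianVec_prod (f : ℝ → ℝ≥0∞) (hf : Measurable f) (n : ℕ) :
    ∫⁻ v, ∏ j, f (v j) ∂(gaussianVec n) = (∫⁻ x, f x ∂(gaussianReal 0 1)) ^ n := by
  induction n with
  | zero => simp [gaussianVec]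
  | succ n ih =>
    have h := measurePreserving_piFinSuccAbove
      (fun _ : Fin (n + 1) => gaussianReal 0 1) 0
    have hg : Measurable (fun z : ℝ × (Fin n → ℝ) => f z.1 * ∏ j, f (z.2 j)) := by
      exact (hf.comp measurable_fst).mul
        (Finset.measurable_prod _ fun j _ => hf.comp ((measurable_pi_apply j).comp measurable_snd))
    have key : ∫⁻ v : Fin (n + 1) → ℝ, ∏ j, f (v j)
          ∂(Measure.pi fun _ : Fin (n + 1) => gaussianReal 0 1)
        = ∫⁻ z : ℝ × (Fin n → ℝ), f z.1 * ∏ j, f (z.2 j)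
            ∂((gaussianReal 0 1).prod (Measure.pi fun _ : Fin n => gaussianReal 0 1)) := by
      rw [← h.lintegral_comp hg]
      refine lintegral_congr fun v => ?_
      simp [MeasurableEquiv.piFinSuccAbove_apply, Fin.prod_univ_succ, Fin.zero_succAbove, Fin.tail]
    rw [gaussianVec] at ih ⊢
    rw [key, lintegral_prod_mul (f := f) (g := fun w : Fin n → ℝ => ∏ j, f (w j))
      hf.aemeasurable
      (Finset.measurable_prod _ fun j _ => hf.comp (measurable_pi_apply j)).aemeasurable,
      ih, pow_succ, mul_comm]

lemma gaussianVec_tail (n : ℕ) (a : ℝ) :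
    gaussianVec n {v | a ≤ ∑ j, (v j) ^ 2} ≤
      ENNReal.ofReal (Real.exp (-(a / 4)) * Real.sqrt 2 ^ n) := by
  set f : ℝ → ℝ≥0∞ := fun x => ENNReal.ofReal (Real.exp (x ^ 2 / 4)) with hfdef
  have hf : Measurable f := by
    exact (Real.measurable_exp.comp ((measurable_id.pow_const 2).div_const 4)).ennreal_ofReal
  set F : (Fin n → ℝ) → ℝ≥0∞ :=
    fun v => ENNReal.ofReal (Real.exp ((∑ j, (v j) ^ 2) / 4)) with hFdef
  have hsum : Measurable fun v : Fin n → ℝ => ∑ j, (v j) ^ 2 :=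
    Finset.measurable_sum _ fun j _ => (measurable_pi_apply j).pow_const 2
  have hF : Measurable F := (Real.measurable_exp.comp (hsum.div_const 4)).ennreal_ofReal
  have hFeq : ∀ v : Fin n → ℝ, F v = ∏ j, f (v j) := by
    intro v
    rw [hFdef]
    simp only
    rw [← ENNReal.ofReal_prod_of_nonneg (fun j _ => Real.exp_nonneg _)]
    congr 1
    rw [← Real.exp_sum, Finset.sum_div]
  have hI : ∫⁻ v, F v ∂(gaussianVec n) = ENNReal.ofReal (Real.sqrt 2) ^ n := by
    simp_rw [hFeq]
    rw [lintegral_gaussianVec_prod f hf n, gauss_exp_quarter]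
  set ε : ℝ≥0∞ := ENNReal.ofReal (Real.exp (a / 4)) with hε
  have hε0 : ε ≠ 0 := by
    simp [hε, Real.exp_pos]
  have hεtop : ε ≠ ⊤ := ENNReal.ofReal_ne_top
  have hmono : {v : Fin n → ℝ | a ≤ ∑ j, (v j) ^ 2} ⊆ {v | ε ≤ F v} := by
    intro v hv
    exact ENNReal.ofReal_le_ofReal (Real.exp_le_exp.2 (by
      have : a ≤ ∑ j, (v j) ^ 2 := hv
      linarith))
  have markov := mul_meas_ge_le_lintegral₀ (μ := gaussianVec n) hF.aemeasurable ε
  have h1 : gaussianVec n {v | a ≤ ∑ j, (v j) ^ 2} ≤ (∫⁻ v, F v ∂(gaussianVec n)) / ε := by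
    rw [ENNReal.le_div_iff_mul_le (Or.inl hε0) (Or.inl hεtop), mul_comm]
    exact le_trans (mul_le_mul_right (measure_mono hmono) ε) markov
  refine h1.trans ?_
  rw [hI, hε, ← ENNReal.ofReal_pow (Real.sqrt_nonneg 2),
    ← ENNReal.ofReal_div_of_pos (Real.exp_pos _)]
  apply ENNReal.ofReal_le_ofReal
  rw [div_eq_mul_inv, ← Real.exp_neg, mul_comm]

instance gaussianMatrix_isProbabilityMeasure (n m : ℕ) :
    IsProbabilityMeasure (gaussianMatrix n m) := by
  unfold gaussianMatrix
  exact Measure.pi.instIsProbabilityMeasure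
    (μ := fun _ : Fin n => Measure.pi fun _ : Fin m => gaussianReal 0 1)

lemma gaussianMatrix_eval {n m : ℕ} (S : Set (Fin m → ℝ)) (_hS : MeasurableSet S) (i : Fin n) :
    gaussianMatrix n m (Function.eval i ⁻¹' S) = gaussianVec m S := by
  show (Measure.pi fun _ : Fin n => Measure.pi fun _ : Fin m => gaussianReal 0 1)
      (Function.eval i ⁻¹' S) = _
  rw [Set.eval_preimage]
  erw [Measure.pi_pi]
  rw [Finset.prod_eq_single i]
  · rw [Function.update_self]
    rfl
  · intro j _ hj
    rw [Function.update_of_ne hj]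
    exact measure_univ
  · intro h
    exact absurd (Finset.mem_univ i) h

/-- Products of chi-squared variables, small-`k` case: for `k < log(1/δ)`,
`p ≥ log(1/δ)` and `r ≤ c·log(1/δ)`, i.i.d. standard Gaussian vectors `uᵢ ∈ ℝʳ`, `vᵢ ∈ ℝᵖ`
(`i = 1, …, k`) satisfy `Σᵢ ‖uᵢ‖₂²·‖vᵢ‖₂² ≤ C·k·log(1/δ)·p` with probability `1 - δ`. -/
theorem chi_squared_products_small_k :
    ∃ c C : ℝ, 0 < c ∧ 0 < C ∧
      ∀ (δ : ℝ), 0 < δ → δ < 1 / 2 →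
      ∀ (k p r : ℕ), 0 < k → 0 < p → 0 < r →
        (k : ℝ) < Real.log (1 / δ) → Real.log (1 / δ) ≤ (p : ℝ) →
        (r : ℝ) ≤ c * Real.log (1 / δ) →
        ENNReal.ofReal (1 - δ) ≤
          ((gaussianMatrix k r).prod (gaussianMatrix k p))
            {x : Matrix (Fin k) (Fin r) ℝ × Matrix (Fin k) (Fin p) ℝ |
              ∑ i, (∑ j, (x.1 i j) ^ 2) * (∑ j, (x.2 i j) ^ 2) ≤
                C * (k : ℝ) * Real.log (1 / δ) * (p : ℝ)} := by
  refine ⟨1, 256, one_pos, by norm_num, ?_⟩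
  intro δ hδ0 hδhalf k p r hk hp hr hkL hLp hrL
  set L : ℝ := Real.log (1 / δ) with hLdef
  rw [one_mul] at hrL
  have hk1 : (1 : ℝ) ≤ (k : ℝ) := by exact_mod_cast hk
  have hL1 : (1 : ℝ) < L := lt_of_le_of_lt hk1 hkL
  have hp1 : (1 : ℝ) < (p : ℝ) := lt_of_lt_of_le hL1 hLp
  have hδeq : δ = Real.exp (-L) := by
    rw [hLdef, one_div, Real.log_inv, neg_neg, Real.exp_log hδ0]
  set ρ := (gaussianMatrix k r).prod (gaussianMatrix k p) with hρ
  have hprobρ : IsProbabilityMeasure ρ := by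
    rw [hρ]; infer_instance
  -- tail sets
  set Su : Set (Fin r → ℝ) := {v | 16 * L ≤ ∑ j, (v j) ^ 2} with hSu
  set Sv : Set (Fin p → ℝ) := {v | 16 * (p : ℝ) ≤ ∑ j, (v j) ^ 2} with hSv
  have hSuM : MeasurableSet Su :=
    measurableSet_le measurable_const (Finset.measurable_sum _ fun j _ =>
      (measurable_pi_apply j).pow_const 2)
  have hSvM : MeasurableSet Sv :=
    measurableSet_le measurable_const (Finset.measurable_sum _ fun j _ =>
      (measurable_pi_apply j).pow_const 2)
  set Bad : Set (Matrix (Fin k) (Fin r) ℝ × Matrix (Fin k) (Fin p) ℝ) :=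
    (⋃ i : Fin k, Prod.fst ⁻¹' (Function.eval i ⁻¹' Su)) ∪
      (⋃ i : Fin k, Prod.snd ⁻¹' (Function.eval i ⁻¹' Sv)) with hBadDef
  -- marginals
  have hfst : ∀ A : Set (Matrix (Fin k) (Fin r) ℝ), ρ (Prod.fst ⁻¹' A) = gaussianMatrix k r A := by
    intro A
    rw [hρ, ← Set.prod_univ, Measure.prod_prod, measure_univ, mul_one]
  have hsnd : ∀ B : Set (Matrix (Fin k) (Fin p) ℝ), ρ (Prod.snd ⁻¹' B) = gaussianMatrix k p B := by
    intro B
    rw [hρ, ← Set.univ_prod, Measure.prod_prod, measure_univ, one_mul]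
  -- real-number tail estimates
  have hsqrt2 : Real.sqrt 2 ≤ Real.exp (1 / 2) := by
    have h2 : (2 : ℝ) ≤ Real.exp (1 / 2) ^ 2 := by
      rw [sq, ← Real.exp_add]
      norm_num
      linarith [Real.exp_one_gt_d9]
    calc Real.sqrt 2 ≤ Real.sqrt (Real.exp (1 / 2) ^ 2) := Real.sqrt_le_sqrt h2
      _ = Real.exp (1 / 2) := Real.sqrt_sq (Real.exp_pos _).le
  have hkexp : (k : ℝ) ≤ Real.exp L := le_trans hkL.le (by linarith [Real.add_one_le_exp L])
  have hpow : ∀ n : ℕ, (n : ℝ) ≤ L → Real.sqrt 2 ^ n ≤ Real.exp (L / 2) := by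
    intro n hn
    calc Real.sqrt 2 ^ n ≤ Real.exp (1 / 2) ^ n :=
          pow_le_pow_left₀ (Real.sqrt_nonneg 2) hsqrt2 n
      _ = Real.exp ((n : ℝ) * (1 / 2)) := (Real.exp_nat_mul _ n).symm
      _ ≤ Real.exp (L / 2) := Real.exp_le_exp.2 (by linarith)
  have hterm1 : (k : ℝ) * (Real.exp (-(16 * L / 4)) * Real.sqrt 2 ^ r) ≤ δ / 2 := by
    have h1 : Real.sqrt 2 ^ r ≤ Real.exp (L / 2) := hpow r hrL
    have : (k : ℝ) * (Real.exp (-(16 * L / 4)) * Real.sqrt 2 ^ r)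
        ≤ Real.exp L * (Real.exp (-(16 * L / 4)) * Real.exp (L / 2)) := by
      apply mul_le_mul hkexp _ (by positivity) (Real.exp_pos _).le
      exact mul_le_mul_of_nonneg_left h1 (Real.exp_pos _).le
    refine this.trans ?_
    rw [← Real.exp_add, ← Real.exp_add, hδeq]
    rw [show Real.exp (-L) / 2 = Real.exp (-L) / 2 from rfl]
    have hee : Real.exp (L + (-(16 * L / 4) + L / 2)) ≤ Real.exp (-L) * (1 / 2) := by
      have h3 : Real.exp (L + (-(16 * L / 4) + L / 2)) ≤ Real.exp (-L - 1) :=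
        Real.exp_le_exp.2 (by nlinarith)
      have h4 : Real.exp (-L - 1) = Real.exp (-L) * Real.exp (-1) := by
        rw [← Real.exp_add]; ring_nf
      have h5 : Real.exp (-1 : ℝ) ≤ 1 / 2 := by
        have hmul : Real.exp (-1 : ℝ) * Real.exp 1 = 1 := by
          rw [← Real.exp_add]; norm_num
        nlinarith [hmul, Real.exp_one_gt_d9, Real.exp_pos (-1 : ℝ)]
      calc Real.exp (L + (-(16 * L / 4) + L / 2)) ≤ Real.exp (-L) * Real.exp (-1) :=
            h3.trans_eq h4
        _ ≤ Real.exp (-L) * (1 / 2) :=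
            mul_le_mul_of_nonneg_left h5 (Real.exp_pos _).le
    linarith [hee]
  have hterm2 : (k : ℝ) * (Real.exp (-(16 * (p : ℝ) / 4)) * Real.sqrt 2 ^ p) ≤ δ / 2 := by
    have h1 : Real.sqrt 2 ^ p ≤ Real.exp ((p : ℝ) / 2) := by
      calc Real.sqrt 2 ^ p ≤ Real.exp (1 / 2) ^ p :=
            pow_le_pow_left₀ (Real.sqrt_nonneg 2) hsqrt2 p
        _ = Real.exp ((p : ℝ) * (1 / 2)) := (Real.exp_nat_mul _ p).symm
        _ = Real.exp ((p : ℝ) / 2) := by ring_nf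
    have : (k : ℝ) * (Real.exp (-(16 * (p : ℝ) / 4)) * Real.sqrt 2 ^ p)
        ≤ Real.exp L * (Real.exp (-(16 * (p : ℝ) / 4)) * Real.exp ((p : ℝ) / 2)) := by
      apply mul_le_mul hkexp _ (by positivity) (Real.exp_pos _).le
      exact mul_le_mul_of_nonneg_left h1 (Real.exp_pos _).le
    refine this.trans ?_
    rw [← Real.exp_add, ← Real.exp_add, hδeq]
    have hee : Real.exp (L + (-(16 * (p : ℝ) / 4) + (p : ℝ) / 2)) ≤ Real.exp (-L) * (1 / 2) := by
      have h3 : Real.exp (L + (-(16 * (p : ℝ) / 4) + (p : ℝ) / 2)) ≤ Real.exp (-L - 1) :=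
        Real.exp_le_exp.2 (by nlinarith)
      have h4 : Real.exp (-L - 1) = Real.exp (-L) * Real.exp (-1) := by
        rw [← Real.exp_add]; ring_nf
      have h5 : Real.exp (-1 : ℝ) ≤ 1 / 2 := by
        have hmul : Real.exp (-1 : ℝ) * Real.exp 1 = 1 := by
          rw [← Real.exp_add]; norm_num
        nlinarith [hmul, Real.exp_one_gt_d9, Real.exp_pos (-1 : ℝ)]
      calc Real.exp (L + (-(16 * (p : ℝ) / 4) + (p : ℝ) / 2))
            ≤ Real.exp (-L) * Real.exp (-1) := h3.trans_eq h4
        _ ≤ Real.exp (-L) * (1 / 2) := mul_le_mul_of_nonneg_left h5 (Real.exp_pos _).le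
    linarith [hee]
  -- bound on the bad event
  have hBad : ρ Bad ≤ ENNReal.ofReal δ := by
    have hb1 : ρ Bad ≤ ∑ i : Fin k, ρ (Prod.fst ⁻¹' (Function.eval i ⁻¹' Su))
        + ∑ i : Fin k, ρ (Prod.snd ⁻¹' (Function.eval i ⁻¹' Sv)) := by
      refine le_trans (measure_union_le _ _) (add_le_add ?_ ?_) <;>
        exact measure_iUnion_fintype_le _ _
    have hu : ∀ i : Fin k, ρ (Prod.fst ⁻¹' (Function.eval i ⁻¹' Su))
        ≤ ENNReal.ofReal (Real.exp (-(16 * L / 4)) * Real.sqrt 2 ^ r) := by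
      intro i
      rw [hfst, gaussianMatrix_eval Su hSuM i]
      exact gaussianVec_tail r (16 * L)
    have hv : ∀ i : Fin k, ρ (Prod.snd ⁻¹' (Function.eval i ⁻¹' Sv))
        ≤ ENNReal.ofReal (Real.exp (-(16 * (p : ℝ) / 4)) * Real.sqrt 2 ^ p) := by
      intro i
      rw [hsnd, gaussianMatrix_eval Sv hSvM i]
      exact gaussianVec_tail p (16 * (p : ℝ))
    refine hb1.trans ?_
    calc ∑ i : Fin k, ρ (Prod.fst ⁻¹' (Function.eval i ⁻¹' Su))
          + ∑ i : Fin k, ρ (Prod.snd ⁻¹' (Function.eval i ⁻¹' Sv))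
        ≤ ∑ _i : Fin k, ENNReal.ofReal (Real.exp (-(16 * L / 4)) * Real.sqrt 2 ^ r)
          + ∑ _i : Fin k, ENNReal.ofReal (Real.exp (-(16 * (p : ℝ) / 4)) * Real.sqrt 2 ^ p) :=
          add_le_add (Finset.sum_le_sum fun i _ => hu i) (Finset.sum_le_sum fun i _ => hv i)
      _ = (k : ℝ≥0∞) * ENNReal.ofReal (Real.exp (-(16 * L / 4)) * Real.sqrt 2 ^ r)
          + (k : ℝ≥0∞) * ENNReal.ofReal (Real.exp (-(16 * (p : ℝ) / 4)) * Real.sqrt 2 ^ p) := by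
          rw [Finset.sum_const, Finset.sum_const, Finset.card_univ, Fintype.card_fin,
            nsmul_eq_mul, nsmul_eq_mul]
      _ = ENNReal.ofReal ((k : ℝ) * (Real.exp (-(16 * L / 4)) * Real.sqrt 2 ^ r))
          + ENNReal.ofReal ((k : ℝ) * (Real.exp (-(16 * (p : ℝ) / 4)) * Real.sqrt 2 ^ p)) := by
          have hkm : ∀ x : ℝ, (k : ℝ≥0∞) * ENNReal.ofReal x = ENNReal.ofReal ((k : ℝ) * x) := by
            intro x
            rw [ENNReal.ofReal_mul (Nat.cast_nonneg k), ENNReal.ofReal_natCast]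
          rw [hkm, hkm]
      _ ≤ ENNReal.ofReal (δ / 2) + ENNReal.ofReal (δ / 2) :=
          add_le_add (ENNReal.ofReal_le_ofReal hterm1) (ENNReal.ofReal_le_ofReal hterm2)
      _ = ENNReal.ofReal δ := by
          rw [← ENNReal.ofReal_add (by positivity) (by positivity)]
          norm_num
  -- the complement of the bad event is contained in the target event
  have hsubset : Badᶜ ⊆
      {x : Matrix (Fin k) (Fin r) ℝ × Matrix (Fin k) (Fin p) ℝ |
        ∑ i, (∑ j, (x.1 i j) ^ 2) * (∑ j, (x.2 i j) ^ 2) ≤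
          256 * (k : ℝ) * L * (p : ℝ)} := by
    intro x hx
    simp only [hBadDef, Set.compl_union, Set.mem_inter_iff, Set.compl_iUnion, Set.mem_iInter,
      Set.mem_compl_iff, Set.mem_preimage, hSu, hSv, Set.mem_setOf_eq, not_le] at hx
    obtain ⟨hxu, hxv⟩ := hx
    have hbound : ∀ i : Fin k, (∑ j, (x.1 i j) ^ 2) * (∑ j, (x.2 i j) ^ 2)
        ≤ (16 * L) * (16 * (p : ℝ)) := by
      intro i
      have h1 : ∑ j, (x.1 i j) ^ 2 ≤ 16 * L := le_of_lt (not_le.mp (hxu i))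
      have h2 : ∑ j, (x.2 i j) ^ 2 ≤ 16 * (p : ℝ) := le_of_lt (not_le.mp (hxv i))
      have h1n : (0 : ℝ) ≤ ∑ j, (x.1 i j) ^ 2 := Finset.sum_nonneg fun j _ => sq_nonneg _
      have h2n : (0 : ℝ) ≤ ∑ j, (x.2 i j) ^ 2 := Finset.sum_nonneg fun j _ => sq_nonneg _
      exact mul_le_mul h1 h2 h2n (by positivity)
    calc ∑ i, (∑ j, (x.1 i j) ^ 2) * (∑ j, (x.2 i j) ^ 2)
        ≤ ∑ _i : Fin k, (16 * L) * (16 * (p : ℝ)) :=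
          Finset.sum_le_sum fun i _ => hbound i
      _ = (k : ℝ) * ((16 * L) * (16 * (p : ℝ))) := by
          rw [Finset.sum_const, Finset.card_univ, Fintype.card_fin, nsmul_eq_mul]
      _ = 256 * (k : ℝ) * L * (p : ℝ) := by ring
  -- conclude
  calc ENNReal.ofReal (1 - δ) = 1 - ENNReal.ofReal δ := by
        rw [ENNReal.ofReal_sub _ hδ0.le, ENNReal.ofReal_one]
    _ ≤ 1 - ρ Bad := tsub_le_tsub_left hBad 1
    _ ≤ ρ Badᶜ := by
        rw [tsub_le_iff_right]
        calc (1 : ℝ≥0∞) = ρ Set.univ := measure_univ.symm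
          _ = ρ (Badᶜ ∪ Bad) := by rw [Set.compl_union_self]
          _ ≤ ρ Badᶜ + ρ Bad := measure_union_le _ _
    _ ≤ _ := measure_mono hsubset
end

section
/- For every constant C ≥ 1 there exist constants c > 0 and δ₀ > 0 such that the following holds. Let δ ∈ (0, δ₀), n = ⌈log(1/δ)⌉, and let q be a positive integer with q ≤ c·log(1/δ)/log(log(1/δ)) and q ≤ n/2. Let g ∈ ℝⁿ be a standard Gaussian vector. Then the probability of the event { (Σ_{i=1}^{q} gᵢ²) / ‖g‖₂² ≤ 1/(50·C²·n³) } is at least 10δ. -/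
open MeasureTheory ProbabilityTheory Matrix
open scoped NNReal ENNReal

open Real in
lemma gauss_Icc_lb {x y m : ℝ} (hxy : x ≤ y)
    (hm : ∀ t ∈ Set.Icc x y, m ≤ ProbabilityTheory.gaussianPDFReal 0 1 t) :
    ENNReal.ofReal (m * (y - x)) ≤ ProbabilityTheory.gaussianReal 0 1 (Set.Icc x y) := by
  rw [ProbabilityTheory.gaussianReal_apply_eq_integral 0 one_ne_zero]
  apply ENNReal.ofReal_le_ofReal
  have hvol : (volume (Set.Icc x y)).toReal = y - x := by
    rw [Real.volume_Icc, ENNReal.toReal_ofReal (sub_nonneg.2 hxy)]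
  have h := setIntegral_ge_of_const_le measurableSet_Icc
    (by rw [Real.volume_Icc]; exact ENNReal.ofReal_ne_top) hm
    ((ProbabilityTheory.integrable_gaussianPDFReal 0 1).integrableOn)
  rwa [measureReal_def, hvol, smul_eq_mul, mul_comm] at h

open Real ProbabilityTheory in
lemma pdf_lb (s : ℝ) (t : ℝ) (ht : t ^ 2 ≤ s) :
    Real.exp (-s/2) / Real.sqrt (2 * Real.pi) ≤ gaussianPDFReal 0 1 t := by
  simp only [gaussianPDFReal, NNReal.coe_one, mul_one, sub_zero, one_div]
  rw [div_eq_inv_mul]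
  gcongr (Real.sqrt (2*Real.pi))⁻¹ * Real.exp (-?_/2) <;> linarith

lemma sqrt_two_pi_le : Real.sqrt (2 * Real.pi) ≤ 2.51 := by
  rw [show (2.51:ℝ) = Real.sqrt (2.51^2) by rw [Real.sqrt_sq]; norm_num]
  apply Real.sqrt_le_sqrt
  nlinarith [Real.pi_lt_d2]

lemma num1 : (1/5 : ℝ) ≤ Real.exp (-(1:ℝ)/2) / Real.sqrt (2 * Real.pi) := by
  rw [le_div_iff₀ (by positivity)]
  have h2 : (0.6:ℝ) ≤ Real.exp (-(1:ℝ)/2) := by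
    rw [show (-(1:ℝ)/2) = -(1/2) by ring, Real.exp_neg,
      le_inv_comm₀ (by norm_num) (Real.exp_pos _)]
    have h : Real.exp ((1:ℝ)/2)^2 = Real.exp 1 := by
      rw [sq, ← Real.exp_add]; norm_num
    nlinarith [Real.exp_one_lt_d9, Real.exp_pos ((1:ℝ)/2)]
  nlinarith [sqrt_two_pi_le, Real.sqrt_nonneg (2*Real.pi)]

lemma num2 : (1/20 : ℝ) ≤ Real.exp (-(4:ℝ)/2) / Real.sqrt (2 * Real.pi) := by
  rw [le_div_iff₀ (by positivity)]
  have h2 : (0.13:ℝ) ≤ Real.exp (-(4:ℝ)/2) := by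
    rw [show (-(4:ℝ)/2) = -2 by ring, Real.exp_neg,
      le_inv_comm₀ (by norm_num) (Real.exp_pos _)]
    have h : Real.exp (2:ℝ) = Real.exp 1 * Real.exp 1 := by
      rw [← Real.exp_add]; norm_num
    nlinarith [Real.exp_one_lt_d9, Real.exp_pos (1:ℝ)]
  nlinarith [sqrt_two_pi_le, Real.sqrt_nonneg (2*Real.pi)]

lemma lbB : ENNReal.ofReal (1/20 : ℝ) ≤ ProbabilityTheory.gaussianReal 0 1 (Set.Icc 1 2) := by
  have := gauss_Icc_lb (x := 1) (y := 2) (m := 1/20) (by norm_num)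
    (fun t ht => le_trans num2 (pdf_lb 4 t (by nlinarith [ht.1, ht.2])))
  refine le_trans (le_of_eq ?_) this
  norm_num

lemma lbA {a : ℝ} (ha : 0 < a) (ha1 : a ≤ 1) :
    ENNReal.ofReal (2*a/5 : ℝ) ≤ ProbabilityTheory.gaussianReal 0 1 (Set.Icc (-a) a) := by
  have := gauss_Icc_lb (x := -a) (y := a) (m := 1/5) (by linarith)
    (fun t ht => le_trans num1 (pdf_lb 1 t (by nlinarith [ht.1, ht.2])))
  refine le_trans (le_of_eq ?_) this
  congr 1; ring

lemma card_filter_lt (n q : ℕ) (h : q ≤ n) :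
    (Finset.univ.filter (fun i : Fin n => (i : ℕ) < q)).card = q := by
  have : (Finset.univ.filter (fun i : Fin n => (i : ℕ) < q)) =
      (Finset.range q).attachFin (fun m hm => lt_of_lt_of_le (Finset.mem_range.mp hm) h) := by
    ext i
    simp [Finset.mem_attachFin]
  rw [this, Finset.card_attachFin, Finset.card_range]


lemma ineq1 {C L N : ℝ} (hC : 1 ≤ C) (hL20 : 20 ≤ L) (hLC : 120*C ≤ L)
    (hN1 : 1 ≤ N) (hNL2 : N < L + 1) : 25*C*N^2 ≤ L^3 := by
  have hNsq : N^2 ≤ 2*L^2 := by nlinarith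
  have h1 : 25*C*N^2 ≤ 50*C*L^2 := by nlinarith
  nlinarith [mul_le_mul_of_nonneg_right (show 50*C ≤ L by linarith) (sq_nonneg L)]

lemma ineq2 {C N qr : ℝ} (hC : 1 ≤ C) (hN1 : 1 ≤ N) (hq : qr ≤ N/2) :
    qr * (1/(10*C*N^2))^2 ≤ 1/(50*C^2*N^3) := by
  rw [div_pow, one_pow, mul_one_div, div_le_div_iff₀ (by positivity) (by positivity)]
  have key : qr * (50*C^2*N^3) ≤ 25*C^2*N^4 := by
    nlinarith [mul_le_mul_of_nonneg_left hq (show (0:ℝ) ≤ 50*C^2*N^3 by positivity)]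
  nlinarith [key, sq_nonneg (C*N^2)]

lemma final_real {C L N δ : ℝ} (q : ℕ) (hC : 1 ≤ C) (hL20 : 20 ≤ L) (hLC : 120*C ≤ L)
    (hN1 : 1 ≤ N) (hNL2 : N < L + 1) (hlogL : 0 < Real.log L)
    (hqc : (q:ℝ) ≤ 1/12 * L / Real.log L) (hδ : δ = Real.exp (-L)) :
    10*δ ≤ (2*(1/(10*C*N^2))/5)^q * (1/20) := by
  have hCpos : (0:ℝ) < C := by linarith
  have hkey : (25*C*N^2)^q ≤ Real.exp (L/4) := by
    have hpos : (0:ℝ) < 25*C*N^2 := by positivity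
    calc (25*C*N^2)^q ≤ (L^3)^q := pow_le_pow_left₀ hpos.le (ineq1 hC hL20 hLC hN1 hNL2) q
      _ = Real.exp (Real.log L) ^ (3*q) := by
          rw [← pow_mul, Real.exp_log (by linarith)]
      _ = Real.exp ((3*q : ℕ) * Real.log L) := by rw [← Real.exp_nat_mul]
      _ ≤ Real.exp (L/4) := by
          apply Real.exp_le_exp.mpr
          push_cast
          have hql : (q:ℝ) * Real.log L ≤ L/12 := by
            rw [le_div_iff₀ hlogL] at hqc
            linarith
          linarith
  have hB : 2*(1/(10*C*N^2))/5 = (25*C*N^2)⁻¹ := by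
    field_simp
    ring
  have h200 : (200:ℝ) ≤ Real.exp (3*L/4) := by
    have h15 : (200:ℝ) ≤ Real.exp 15 := by
      have he : Real.exp (15:ℝ) = Real.exp 1 ^ (15:ℕ) := by
        rw [← Real.exp_nat_mul]; norm_num
      rw [he]
      calc (200:ℝ) ≤ 2^(15:ℕ) := by norm_num
        _ ≤ Real.exp 1 ^ (15:ℕ) := by
            apply pow_le_pow_left₀ (by norm_num)
            nlinarith [Real.exp_one_gt_d9]
    calc (200:ℝ) ≤ Real.exp 15 := h15
      _ ≤ Real.exp (3*L/4) := Real.exp_le_exp.mpr (by linarith)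
  have hBq : Real.exp (-(L/4)) ≤ (2*(1/(10*C*N^2))/5)^q := by
    rw [hB, inv_pow, Real.exp_neg]
    exact inv_anti₀ (by positivity) hkey
  have hchain : 200 * Real.exp (-L) ≤ Real.exp (-(L/4)) := by
    rw [show -(L/4) = 3*L/4 + (-L) by ring, Real.exp_add]
    exact mul_le_mul_of_nonneg_right h200 (Real.exp_pos _).le
  rw [hδ]
  nlinarith [hBq, hchain, Real.exp_pos (-(L/4)), Real.exp_pos (-L)]


/-- For a standard Gaussian vector `g ∈ ℝⁿ` with `n = ⌈log(1/δ)⌉`, and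
`q ≤ c·log(1/δ)/log log(1/δ)` with `q ≤ n/2`, the first `q` coordinates carry an unusually
tiny fraction of the squared norm, `(Σ_{i<q} gᵢ²)/‖g‖₂² ≤ 1/(50·C²·n³)`, with probability
at least `10δ`. -/
theorem small_leading_coordinates_probability :
    ∀ C : ℝ, 1 ≤ C → ∃ c δ₀ : ℝ, 0 < c ∧ 0 < δ₀ ∧
      ∀ δ : ℝ, 0 < δ → δ < δ₀ →
      ∀ n : ℕ, n = ⌈Real.log (1 / δ)⌉₊ →
      ∀ q : ℕ, 0 < q →
        (q : ℝ) ≤ c * Real.log (1 / δ) / Real.log (Real.log (1 / δ)) →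
        (q : ℝ) ≤ (n : ℝ) / 2 →
        ENNReal.ofReal (10 * δ) ≤
          (gaussianVec n)
            {g : Fin n → ℝ |
              (∑ i ∈ Finset.univ.filter (fun i : Fin n => (i : ℕ) < q), (g i) ^ 2) /
                  (∑ i, (g i) ^ 2) ≤
                1 / (50 * C ^ 2 * (n : ℝ) ^ 3)} := by
  intro C hC
  refine ⟨1/12, Real.exp (-(120*C + 20)), by norm_num, Real.exp_pos _, ?_⟩
  intro δ hδ hδ₀ n hn q hq hqc hqn
  set L := Real.log (1 / δ) with hLdef
  have hCpos : (0:ℝ) < C := by linarith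
  have hLgt : 120*C + 20 < L := by
    have h1 : Real.log δ < -(120*C + 20) := by
      calc Real.log δ < Real.log (Real.exp (-(120*C + 20))) := Real.log_lt_log hδ hδ₀
        _ = -(120*C + 20) := Real.log_exp _
    rw [hLdef, one_div, Real.log_inv]
    linarith
  have hL20 : (20:ℝ) ≤ L := by linarith
  have hLC : 120*C ≤ L := by linarith
  have hlogL : (0:ℝ) < Real.log L := Real.log_pos (by linarith)
  set N := (n : ℝ) with hNdef
  have hNL : L ≤ N := by rw [hNdef, hn]; exact Nat.le_ceil L
  have hNL2 : N < L + 1 := by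
    rw [hNdef, hn]; exact Nat.ceil_lt_add_one (by linarith)
  have hN1 : (1:ℝ) ≤ N := by linarith
  have hqN : (q:ℝ) ≤ N / 2 := hqn
  have hqn' : q < n := by
    have h : (q:ℝ) < (n:ℝ) := by rw [← hNdef]; linarith
    exact_mod_cast h
  set A : ℝ := 1/(10*C*N^2) with hAdef
  have hApos : 0 < A := by positivity
  have hA1 : A ≤ 1 := by
    rw [hAdef, div_le_one (by positivity)]
    nlinarith
  set j : Fin n := ⟨q, hqn'⟩ with hjdef
  set S : Fin n → Set ℝ := fun i =>
    if (i:ℕ) < q then Set.Icc (-A) A else if (i:ℕ) = q then Set.Icc 1 2 else Set.univ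
    with hSdef
  have hsub : Set.univ.pi S ⊆
      {g : Fin n → ℝ |
        (∑ i ∈ Finset.univ.filter (fun i : Fin n => (i : ℕ) < q), (g i) ^ 2) /
            (∑ i, (g i) ^ 2) ≤ 1 / (50 * C ^ 2 * N ^ 3)} := by
    intro g hg
    rw [Set.mem_univ_pi] at hg
    have hgj : g j ∈ Set.Icc (1:ℝ) 2 := by
      have := hg j
      rw [hSdef] at this
      simpa [hjdef, lt_irrefl] using this
    have hden : (1:ℝ) ≤ ∑ i, (g i) ^ 2 := by
      refine le_trans ?_ (Finset.single_le_sum (fun i _ => sq_nonneg (g i)) (Finset.mem_univ j))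
      nlinarith [hgj.1, hgj.2]
    have hnum : (∑ i ∈ Finset.univ.filter (fun i : Fin n => (i : ℕ) < q), (g i) ^ 2)
        ≤ (q:ℝ) * A^2 := by
      calc (∑ i ∈ Finset.univ.filter (fun i : Fin n => (i : ℕ) < q), (g i) ^ 2)
          ≤ ∑ _i ∈ Finset.univ.filter (fun i : Fin n => (i : ℕ) < q), A^2 := by
            refine Finset.sum_le_sum (fun i hi => ?_)
            have hiq : (i:ℕ) < q := (Finset.mem_filter.mp hi).2
            have := hg i
            rw [hSdef] at this
            simp only [if_pos hiq] at this
            exact sq_le_sq' this.1 this.2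
        _ = (q:ℝ) * A^2 := by
            rw [Finset.sum_const, card_filter_lt n q (le_of_lt hqn'), nsmul_eq_mul]
    have hnum0 : (0:ℝ) ≤ ∑ i ∈ Finset.univ.filter (fun i : Fin n => (i : ℕ) < q), (g i) ^ 2 :=
      Finset.sum_nonneg (fun i _ => sq_nonneg _)
    refine Set.mem_setOf.mpr (le_trans (div_le_self hnum0 hden) (le_trans hnum ?_))
    rw [hAdef]
    exact ineq2 hC hN1 hqN
  set lb : Fin n → ℝ≥0∞ := fun i =>
    if (i:ℕ) < q then ENNReal.ofReal (2*A/5) else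
      if (i:ℕ) = q then ENNReal.ofReal (1/20) else 1 with hlbdef
  have hprod : ∏ i, lb i = ENNReal.ofReal (2*A/5) ^ q * ENNReal.ofReal (1/20) := by
    rw [← Finset.prod_filter_mul_prod_filter_not Finset.univ (fun i : Fin n => (i:ℕ) < q) lb]
    congr 1
    · rw [Finset.prod_congr rfl (fun i hi => ?_), Finset.prod_const,
        card_filter_lt n q (le_of_lt hqn')]
      rw [hlbdef]
      simp only [if_pos (Finset.mem_filter.mp hi).2]
    · rw [Finset.prod_congr rfl
        (g := fun i => if i = j then ENNReal.ofReal (1/20) else 1) (fun i hi => ?_)]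
      · rw [Finset.prod_ite_eq' _ j (fun _ => ENNReal.ofReal (1/20)), if_pos]
        simp [hjdef]
      · have hiq : ¬ (i:ℕ) < q := by
          simpa using (Finset.mem_filter.mp hi).2
        rw [hlbdef]
        simp only [if_neg hiq]
        congr 1
        simp [hjdef, Fin.ext_iff]
  have hle : ∏ i, lb i ≤ ∏ i, ProbabilityTheory.gaussianReal 0 1 (S i) := by
    refine Finset.prod_le_prod' (fun i _ => ?_)
    rw [hlbdef, hSdef]
    by_cases h1 : (i:ℕ) < q
    · simp only [if_pos h1]
      exact lbA hApos hA1
    · by_cases h2 : (i:ℕ) = q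
      · simp only [if_neg h1, if_pos h2]
        exact lbB
      · simp only [if_neg h1, if_neg h2]
        rw [show ProbabilityTheory.gaussianReal 0 1 Set.univ = 1 from measure_univ]
  have hexpL : Real.exp L = 1 / δ := Real.exp_log (by positivity)
  have hdelta : δ = Real.exp (-L) := by
    rw [Real.exp_neg, hexpL]
    field_simp
  have hreal : 10 * δ ≤ (2*A/5)^q * (1/20) := by
    rw [hAdef]
    exact final_real q hC hL20 hLC hN1 hNL2 hlogL hqc hdelta
  calc ENNReal.ofReal (10 * δ)
      ≤ ENNReal.ofReal ((2*A/5)^q * (1/20)) := ENNReal.ofReal_le_ofReal hreal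
    _ = ENNReal.ofReal (2*A/5) ^ q * ENNReal.ofReal (1/20) := by
        rw [ENNReal.ofReal_mul (by positivity), ENNReal.ofReal_pow (by positivity)]
    _ = ∏ i, lb i := hprod.symm
    _ ≤ ∏ i, ProbabilityTheory.gaussianReal 0 1 (S i) := hle
    _ = gaussianVec n (Set.univ.pi S) := (Measure.pi_pi _ _).symm
    _ ≤ _ := measure_mono hsub
end
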